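/- Let v be an additive non-degenerate valuation with strong EEFX share θ. Then there exists a partition (X_1,…,X_n) of M such that v(X_ℓ) ≥ θ for all ℓ ∈ [n]. -/

import Mathlib

open Finset

def IsAdditive {ι : Type*} [DecidableEq ι] (v : Finset ι → ℝ) : Prop :=
  ∀ S : Finset ι, v S = ∑ g ∈ S, v {g}

def IsPartition {ι : Type*} [DecidableEq ι] (A : Finset ι) {k : ℕ} (P : Fin k → Finset ι) : Prop :=
  (∀ i j : Fin k, i ≠ j → Disjoint (P i) (P j)) ∧ Finset.univ.biUnion P = A

def EEFXFeasible {ι : Type*} [DecidableEq ι] (M : Finset ι) (v : Finset ι → ℝ) (n : ℕ)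
    (B : Finset ι) : Prop :=
  ∃ P : Fin (n - 1) → Finset ι, IsPartition (M \ B) P ∧
    ∀ j, ∀ g ∈ P j, v (P j \ {g}) ≤ v B

def NonDegenerate {ι : Type*} [DecidableEq ι] (M : Finset ι) (v : Finset ι → ℝ) : Prop :=
  ∀ S ⊆ M, ∀ T ⊆ M, S ≠ T → v S ≠ v T

noncomputable def strongShare {ι : Type*} [DecidableEq ι] (M : Finset ι) (v : Finset ι → ℝ)
    (n : ℕ) : ℝ :=
  sInf {x | ∃ S ⊆ M, v S = x ∧ ∀ T ⊆ M, x ≤ v T → EEFXFeasible M v n T}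

noncomputable def MXS {ι : Type*} [DecidableEq ι] (M : Finset ι) (v : Finset ι → ℝ)
    (n : ℕ) : ℝ :=
  sInf {x | ∃ S ⊆ M, v S = x ∧ EEFXFeasible M v n S}

noncomputable def MMS {ι : Type*} [DecidableEq ι] (M : Finset ι) (v : Finset ι → ℝ)
    (n : ℕ) : ℝ :=
  sSup {x | ∃ P : Fin n → Finset ι, IsPartition M P ∧ x = ⨅ j, v (P j)}

def ResidualSelfFeasible {ι : Type*} [DecidableEq ι] (M : Finset ι) (v : Finset ι → ℝ)
    (n : ℕ) (t : ℝ) : Prop :=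
  ∀ k : ℕ, k < n → ∀ S : Fin k → Finset ι,
    (∀ j, S j ⊆ M) → (∀ i j : Fin k, i ≠ j → Disjoint (S i) (S j)) → (∀ j, v (S j) < t) →
    ∃ X : Fin (n - k) → Finset ι,
      IsPartition (M \ Finset.univ.biUnion S) X ∧ ∀ j, t ≤ v (X j)

noncomputable def RMMS {ι : Type*} [DecidableEq ι] (M : Finset ι) (v : Finset ι → ℝ)
    (n : ℕ) : ℝ :=
  sSup {t | ResidualSelfFeasible M v n t}

section Helpers
variable {ι : Type*} [DecidableEq ι] {v : Finset ι → ℝ}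

lemma v_empty (hadd : IsAdditive v) : v ∅ = 0 := by simp [hadd ∅]

lemma v_union (hadd : IsAdditive v) {A B : Finset ι} (h : Disjoint A B) :
    v (A ∪ B) = v A + v B := by
  rw [hadd (A ∪ B), hadd A, hadd B, Finset.sum_union h]

lemma v_mono (hadd : IsAdditive v) (hnn : ∀ S : Finset ι, 0 ≤ v S) {A B : Finset ι}
    (h : A ⊆ B) : v A ≤ v B := by
  rw [hadd A, hadd B]
  exact Finset.sum_le_sum_of_subset_of_nonneg h (fun g _ _ => hnn {g})

lemma v_sdiff (hadd : IsAdditive v) {S : Finset ι} {g : ι} (h : g ∈ S) :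
    v (S \ {g}) = v S - v {g} := by
  have h1 : (S \ {g}) ∪ {g} = S := by
    ext x; simp only [Finset.mem_union, Finset.mem_sdiff, Finset.mem_singleton]
    constructor
    · rintro (⟨hx, _⟩ | rfl) <;> [exact hx; exact h]
    · intro hx; by_cases hxg : x = g
      · right; exact hxg
      · left; exact ⟨hx, hxg⟩
  have h2 : Disjoint (S \ {g}) {g} := by
    simp [Finset.disjoint_singleton_right]
  have := v_union hadd h2
  rw [h1] at this
  linarith

end Helpers

theorem stmt8 {ι : Type*} [DecidableEq ι] (M : Finset ι) (v : Finset ι → ℝ) (n : ℕ)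
    (hn : 1 ≤ n) (hadd : IsAdditive v) (hnn : ∀ S : Finset ι, 0 ≤ v S)
    (hnd : NonDegenerate M v) :
    ∃ X : Fin n → Finset ι, IsPartition M X ∧
      ∀ ℓ : Fin n, strongShare M v n ≤ v (X ℓ) := by
  obtain ⟨m, rfl⟩ : ∃ m, n = m + 1 := ⟨n - 1, (Nat.succ_pred_eq_of_pos hn).symm⟩
  set A : Set ℝ :=
    {x | ∃ S ⊆ M, v S = x ∧ ∀ T ⊆ M, x ≤ v T → EEFXFeasible M v (m + 1) T} with hA
  have hbdd : BddBelow A := by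
    refine ⟨0, ?_⟩
    rintro x ⟨S, _, hvS, _⟩
    exact hvS ▸ hnn S
  have hshare : strongShare M v (m + 1) = sInf A := rfl
  rcases Nat.eq_zero_or_pos m with hm | hm
  · -- n = 1 case
    subst hm
    refine ⟨fun _ => M, ⟨?_, ?_⟩, ?_⟩
    · intro i j hij
      exfalso
      apply hij
      have hi := i.isLt
      have hj := j.isLt
      exact Fin.ext (by omega)
    · ext x; simp
    · intro ℓ
      rw [hshare]
      apply csInf_le hbdd
      refine ⟨M, subset_rfl, rfl, ?_⟩
      intro T hT hvT
      have hTM : T = M := by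
        by_contra hne
        exact hnd T hT M subset_rfl hne (le_antisymm (v_mono hadd hnn hT) hvT)
      subst hTM
      refine ⟨fun _ => ∅, ⟨fun i => i.elim0, ?_⟩, fun j => j.elim0⟩
      simp
  · -- n ≥ 2
    by_cases hall : ∀ T ⊆ M, EEFXFeasible M v (m + 1) T
    · refine ⟨fun i => if i = 0 then M else ∅, ⟨?_, ?_⟩, ?_⟩
      · intro i j hij
        dsimp only
        split_ifs with h1 h2 h2 <;> simp_all
      · ext x
        simp only [Finset.mem_biUnion, Finset.mem_univ, true_and]
        constructor
        · rintro ⟨i, hx⟩; split_ifs at hx with h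
          · exact hx
          · simp at hx
        · intro hx; exact ⟨0, by simp [hx]⟩
      · intro ℓ
        have h0 : strongShare M v (m + 1) ≤ 0 := by
          rw [hshare]
          exact csInf_le hbdd ⟨∅, Finset.empty_subset M, v_empty hadd,
            fun T hT _ => hall T hT⟩
        exact h0.trans (hnn _)
    · push_neg at hall
      set I : Set (Finset ι) := {T | T ⊆ M ∧ ¬EEFXFeasible M v (m + 1) T} with hI
      have hIfin : I.Finite := by
        apply Set.Finite.subset M.powerset.finite_toSet
        intro T hT; simp only [Finset.coe_powerset, Set.mem_preimage, Set.mem_powerset_iff,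
          Finset.coe_subset]
        exact hT.1
      have hIne : I.Nonempty := by
        obtain ⟨T, hT, hTf⟩ := hall; exact ⟨T, hT, hTf⟩
      obtain ⟨Ts, ⟨hTsM, hTsinf⟩, hTsmax⟩ := Set.exists_max_image I v hIfin hIne
      set c := v Ts with hc
      -- the finite nonempty set of (n-1)-partitions of M \ Ts
      set PartSet : Set (Fin m → Finset ι) := {P | IsPartition (M \ Ts) P} with hPartSet
      have hPartSetfin : PartSet.Finite := by
        apply Set.Finite.subset (Set.Finite.pi
          (fun _ : Fin m => (M \ Ts).powerset.finite_toSet))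
        intro P hP
        simp only [Set.mem_pi, Set.mem_univ, true_implies, Finset.mem_coe,
          Finset.mem_powerset]
        intro i
        exact hP.2 ▸ Finset.subset_biUnion_of_mem P (Finset.mem_univ i)
      have hPartSetne : PartSet.Nonempty := by
        refine ⟨fun i => if i = ⟨0, hm⟩ then M \ Ts else ∅, ?_, ?_⟩
        · intro i j hij
          dsimp only
          split_ifs with h1 h2 h2 <;> simp_all
        · ext x
          simp only [Finset.mem_biUnion, Finset.mem_univ, true_and]
          constructor
          · rintro ⟨i, hx⟩; split_ifs at hx with h
            · exact hx
            · simp at hx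
          · intro hx; exact ⟨⟨0, hm⟩, by simp [hx]⟩
      obtain ⟨P, hP, hPmin⟩ :=
        Set.exists_min_image PartSet (fun P => ∑ i, (v (P i)) ^ 2) hPartSetfin hPartSetne
      obtain ⟨hPd, hPu⟩ := hP
      have hPsub : ∀ i, P i ⊆ M \ Ts :=
        fun i => hPu ▸ Finset.subset_biUnion_of_mem P (Finset.mem_univ i)
      have huniq : ∀ (x : ι) (i i' : Fin m), x ∈ P i → x ∈ P i' → i = i' := by
        intro x i i' h h'
        by_contra hne
        exact Finset.disjoint_left.mp (hPd i i' hne) h h'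
      have hviol : ∃ j, ∃ g ∈ P j, c < v (P j \ {g}) := by
        by_contra hcon
        push_neg at hcon
        exact hTsinf ⟨P, ⟨hPd, hPu⟩, fun j g hg => hcon j g hg⟩
      obtain ⟨j, g, hgj, hjg⟩ := hviol
      have hgMT : g ∈ M \ Ts := hPsub j hgj
      have hgM : g ∈ M := (Finset.mem_sdiff.mp hgMT).1
      have hgTs : g ∉ Ts := (Finset.mem_sdiff.mp hgMT).2
      have hx : 0 < v {g} := by
        have hne : v ∅ ≠ v {g} := by
          apply hnd ∅ (Finset.empty_subset M) {g} (by simpa using hgM)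
          exact fun h => Finset.singleton_ne_empty g h.symm
        rw [v_empty hadd] at hne
        exact lt_of_le_of_ne (hnn {g}) hne
      -- EFX property of the minimizing partition
      have hEFX : ∀ k, k ≠ j → v (P j \ {g}) ≤ v (P k) := by
        intro k hkj
        by_contra hlt
        push_neg at hlt
        set P' : Fin m → Finset ι :=
          fun i => if i = j then P j \ {g} else if i = k then P k ∪ {g} else P i with hP'def
        have hgPk : g ∉ P k := fun h => hkj (huniq g k j h hgj)
        have memP' : ∀ (i : Fin m) (x : ι),
            x ∈ P' i ↔ ((x ∈ P i ∧ (i = j → x ≠ g)) ∨ (i = k ∧ x = g)) := by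
          intro i x
          simp only [hP'def]
          split_ifs with h1 h2
          · subst h1
            have : i ≠ k := Ne.symm hkj
            simp [Finset.mem_sdiff, this]
          · subst h2
            simp only [Finset.mem_union, Finset.mem_singleton]
            tauto
          · simp [h1, h2]
        have hvj : v (P' j) = v (P j) - v {g} := by
          have : P' j = P j \ {g} := by simp [hP'def]
          rw [this, v_sdiff hadd hgj]
        have hvk : v (P' k) = v (P k) + v {g} := by
          have : P' k = P k ∪ {g} := by simp [hP'def, hkj]
          rw [this, v_union hadd (by simpa [Finset.disjoint_singleton_right] using hgPk)]
        have hvsame : ∀ i, i ≠ j → i ≠ k → P' i = P i := by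
          intro i h1 h2; simp [hP'def, h1, h2]
        have hP'part : P' ∈ PartSet := by
          constructor
          · intro a b hab
            rw [Finset.disjoint_left]
            intro x hxa hxb
            rw [memP'] at hxa hxb
            rcases hxa with ⟨hpa, hca⟩ | ⟨hak, hxg⟩
            · rcases hxb with ⟨hpb, hcb⟩ | ⟨hbk, hxg⟩
              · exact hab (huniq x a b hpa hpb)
              · exact hca (huniq x a j hpa (by rw [hxg]; exact hgj)) hxg
            · rcases hxb with ⟨hpb, hcb⟩ | ⟨hbk, hxg'⟩
              · exact hcb (huniq x b j hpb (by rw [hxg]; exact hgj)) hxg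
              · exact hab (hak.trans hbk.symm)
          · ext x
            simp only [Finset.mem_biUnion, Finset.mem_univ, true_and]
            constructor
            · rintro ⟨i, hxi⟩
              rw [memP'] at hxi
              rcases hxi with ⟨hp, _⟩ | ⟨_, rfl⟩
              · exact hPsub i hp
              · exact hgMT
            · intro hxMT
              have : x ∈ Finset.univ.biUnion P := hPu.symm ▸ hxMT
              obtain ⟨i, _, hxi⟩ := Finset.mem_biUnion.mp this
              by_cases hxg : x = g
              · exact ⟨k, (memP' k x).mpr (Or.inr ⟨rfl, hxg⟩)⟩
              · exact ⟨i, (memP' i x).mpr (Or.inl ⟨hxi, fun _ => hxg⟩)⟩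
        have hsum : ∑ i, (v (P' i)) ^ 2 < ∑ i, (v (P i)) ^ 2 := by
          have hvanish : ∀ i ∈ Finset.univ, i ∉ ({j, k} : Finset (Fin m)) →
              (v (P' i)) ^ 2 - (v (P i)) ^ 2 = 0 := by
            intro i _ hi
            simp only [Finset.mem_insert, Finset.mem_singleton, not_or] at hi
            rw [hvsame i hi.1 hi.2]
            ring
          have hsplit : ∑ i, ((v (P' i)) ^ 2 - (v (P i)) ^ 2) =
              ((v (P' j)) ^ 2 - (v (P j)) ^ 2) + ((v (P' k)) ^ 2 - (v (P k)) ^ 2) := by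
            rw [← Finset.sum_subset (Finset.subset_univ ({j, k} : Finset (Fin m))) hvanish,
              Finset.sum_pair (Ne.symm hkj)]
          have hsub : ∑ i, ((v (P' i)) ^ 2 - (v (P i)) ^ 2) =
              ∑ i, (v (P' i)) ^ 2 - ∑ i, (v (P i)) ^ 2 := Finset.sum_sub_distrib _ _
          have hPjg : v (P j \ {g}) = v (P j) - v {g} := v_sdiff hadd hgj
          rw [hPjg] at hlt
          have hkey : ∑ i, (v (P' i)) ^ 2 - ∑ i, (v (P i)) ^ 2 < 0 := by
            rw [← hsub, hsplit, hvj, hvk]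
            nlinarith [mul_pos hx (show (0:ℝ) < v (P j) - v {g} - v (P k) by linarith)]
          linarith
        exact absurd (hPmin P' hP'part) (not_le.mpr hsum)
      -- Build the final n-partition
      set B : Finset ι := Ts ∪ {g} with hB
      set P'' : Fin m → Finset ι := fun i => if i = j then P j \ {g} else P i with hP''def
      set Q : Fin (m + 1) → Finset ι := Fin.cons B P'' with hQdef
      have hQ0 : Q 0 = B := rfl
      have hQs : ∀ i : Fin m, Q i.succ = P'' i := fun i => rfl
      have hP''sub : ∀ i, P'' i ⊆ P i := by
        intro i
        simp only [hP''def]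
        split_ifs with h
        · subst h; exact Finset.sdiff_subset
        · exact subset_rfl
      have hgP'' : ∀ i, g ∉ P'' i := by
        intro i
        simp only [hP''def]
        split_ifs with h
        · simp
        · intro hgi; exact h (huniq g i j hgi hgj)
      have hBsub : B ⊆ M := Finset.union_subset hTsM (by simpa using hgM)
      have hQdisj : ∀ a b : Fin (m + 1), a ≠ b → Disjoint (Q a) (Q b) := by
        have hhead : ∀ i : Fin m, Disjoint B (P'' i) := by
          intro i
          rw [Finset.disjoint_left]
          intro x hxB hxP
          have hxMT : x ∈ M \ Ts := hPsub i (hP''sub i hxP)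
          rcases Finset.mem_union.mp hxB with hxT | hxg
          · exact (Finset.mem_sdiff.mp hxMT).2 hxT
          · rw [Finset.mem_singleton] at hxg
            subst hxg
            exact hgP'' i hxP
        intro a b hab
        rcases Fin.eq_zero_or_eq_succ a with rfl | ⟨i, rfl⟩ <;>
          rcases Fin.eq_zero_or_eq_succ b with rfl | ⟨i', rfl⟩
        · exact absurd rfl hab
        · rw [hQ0, hQs]; exact hhead i'
        · rw [hQ0, hQs]; exact (hhead i).symm
        · rw [hQs, hQs]
          have hii' : i ≠ i' := fun h => hab (by rw [h])
          exact Finset.disjoint_of_subset_left (hP''sub i)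
            (Finset.disjoint_of_subset_right (hP''sub i') (hPd i i' hii'))
      have hQun : Finset.univ.biUnion Q = M := by
        ext x
        simp only [Finset.mem_biUnion, Finset.mem_univ, true_and]
        constructor
        · rintro ⟨i, hxi⟩
          rcases Fin.eq_zero_or_eq_succ i with rfl | ⟨i', rfl⟩
          · rw [hQ0] at hxi; exact hBsub hxi
          · rw [hQs] at hxi
            exact (Finset.mem_sdiff.mp (hPsub i' (hP''sub i' hxi))).1
        · intro hxM
          by_cases hxT : x ∈ Ts
          · exact ⟨0, by rw [hQ0]; exact Finset.mem_union_left _ hxT⟩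
          · by_cases hxg : x = g
            · refine ⟨0, by rw [hQ0]; exact Finset.mem_union_right _ (by simp [hxg])⟩
            · have : x ∈ Finset.univ.biUnion P :=
                hPu.symm ▸ (Finset.mem_sdiff.mpr ⟨hxM, hxT⟩)
              obtain ⟨i, _, hxi⟩ := Finset.mem_biUnion.mp this
              refine ⟨i.succ, ?_⟩
              rw [hQs]
              simp only [hP''def]
              split_ifs with h
              · subst h; exact Finset.mem_sdiff.mpr ⟨hxi, by simpa using hxg⟩
              · exact hxi
      have hQval : ∀ ℓ : Fin (m + 1), c < v (Q ℓ) := by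
        intro ℓ
        rcases Fin.eq_zero_or_eq_succ ℓ with rfl | ⟨i, rfl⟩
        · rw [hQ0, hB, v_union hadd (by simpa [Finset.disjoint_singleton_right] using hgTs)]
          linarith
        · rw [hQs]
          simp only [hP''def]
          split_ifs with h
          · exact hjg
          · exact lt_of_lt_of_le hjg (hEFX i h)
      have hQsubM : ∀ ℓ : Fin (m + 1), Q ℓ ⊆ M := by
        intro ℓ
        rcases Fin.eq_zero_or_eq_succ ℓ with rfl | ⟨i, rfl⟩
        · rw [hQ0]; exact hBsub
        · rw [hQs]
          exact (hP''sub i).trans ((hPsub i).trans (Finset.sdiff_subset))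
      refine ⟨Q, ⟨hQdisj, hQun⟩, ?_⟩
      intro ℓ
      rw [hshare]
      apply csInf_le hbdd
      refine ⟨Q ℓ, hQsubM ℓ, rfl, ?_⟩
      intro T hT hvT
      by_contra hinf
      have hTc : v T ≤ c := hTsmax T ⟨hT, hinf⟩
      linarith [hQval ℓ]
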